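/- Under the r-fold crossed random effects model, the expectation of the naive bootstrap variance estimate (1/N²)∑_i Z_i (X_i − X̄)² equals (1/N)∑_{u≠∅} σ²_u (1 − ν_u/N). -/

import Mathlib

open scoped BigOperators

/-- Theorem 2: expected value of the naive bootstrap variance estimate
`(1/N²) ∑_i Z_i (X_i − X̄)²` equals `(1/N) ∑_{u≠∅} σ²_u (1 − ν_u/N)`. -/
theorem stmt1 {r : ℕ} (hr : 1 ≤ r) {Ω : Type*}
    (E : (Ω → ℝ) →ₗ[ℝ] ℝ) (hE1 : E (fun _ => 1) = 1)
    (Z : (Fin r → ℕ) → ℝ)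
    (hZ01 : ∀ i, Z i = 0 ∨ Z i = 1)
    (hZfin : (Function.support Z).Finite)
    (N : ℝ) (hN : N = ∑ᶠ i, Z i) (hNpos : 0 < N)
    (μ : ℝ) (σ2 : Finset (Fin r) → ℝ)
    (ε : (Fin r → ℕ) → Finset (Fin r) → Ω → ℝ)
    (hdep : ∀ i i' u, (∀ j ∈ u, i j = i' j) → ε i u = ε i' u)
    (hmean : ∀ i u, u.Nonempty → E (ε i u) = 0)
    (hcov : ∀ i i' u u', u.Nonempty → u'.Nonempty →
      E (fun ω => ε i u ω * ε i' u' ω)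
        = σ2 u * (if u = u' ∧ ∀ j ∈ u, i j = i' j then (1 : ℝ) else 0))
    (X : (Fin r → ℕ) → Ω → ℝ)
    (hX : ∀ i ω, X i ω = μ + ∑ u ∈ Finset.univ.erase (∅ : Finset (Fin r)), ε i u ω)
    (Nmatch : (Fin r → ℕ) → Finset (Fin r) → ℝ)
    (hNmatch : ∀ i u, Nmatch i u
      = ∑ᶠ i', Z i' * (if ∀ j ∈ u, i j = i' j then (1 : ℝ) else 0))
    (ν : Finset (Fin r) → ℝ)
    (hν : ∀ u, ν u = (1 / N) * ∑ᶠ i, Z i * Nmatch i u)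
    (Xbar : Ω → ℝ)
    (hXbar : ∀ ω, Xbar ω = (1 / N) * ∑ᶠ i, Z i * X i ω) :
    E (fun ω => (1 / N ^ 2) * ∑ᶠ i, Z i * (X i ω - Xbar ω) ^ 2)
      = (1 / N) * ∑ u ∈ Finset.univ.erase (∅ : Finset (Fin r)),
          σ2 u * (1 - ν u / N) := by
  classical
  have hNne : N ≠ 0 := ne_of_gt hNpos
  set U : Finset (Finset (Fin r)) := Finset.univ.erase (∅ : Finset (Fin r)) with hU
  set S : Finset (Fin r → ℕ) := hZfin.toFinset with hSdef
  have finZ : ∀ (f : (Fin r → ℕ) → ℝ), (∑ᶠ i, Z i * f i) = ∑ i ∈ S, Z i * f i := by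
    intro f
    apply finsum_eq_finset_sum_of_support_subset
    intro i hi
    have h1 : Z i ≠ 0 := left_ne_zero_of_mul hi
    simp only [hSdef, Set.Finite.coe_toFinset, Function.mem_support]
    exact h1
  have hNS : (∑ i ∈ S, Z i) = N := by
    rw [hN, finsum_eq_sum Z hZfin]
  have Esmul : ∀ (c : ℝ) (f : Ω → ℝ), E (fun ω => c * f ω) = c * E f := by
    intro c f
    have h : (fun ω => c * f ω) = c • f := by funext ω; simp
    rw [h, map_smul, smul_eq_mul]
  have Emulr : ∀ (c : ℝ) (f : Ω → ℝ), E (fun ω => f ω * c) = E f * c := by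
    intro c f
    rw [show (fun ω => f ω * c) = (fun ω => c * f ω) from by funext ω; ring, Esmul,
      mul_comm]
  have Econst : ∀ c : ℝ, E (fun _ => c) = c := fun c => by
    simpa [hE1] using Esmul c (fun _ => 1)
  have Eadd : ∀ f g : Ω → ℝ, E (fun ω => f ω + g ω) = E f + E g := fun f g => map_add E f g
  have Esub : ∀ f g : Ω → ℝ, E (fun ω => f ω - g ω) = E f - E g := fun f g => map_sub E f g
  have Esum : ∀ {α : Type} (s : Finset α) (f : α → Ω → ℝ),
      E (fun ω => ∑ x ∈ s, f x ω) = ∑ x ∈ s, E (f x) := by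
    intro α s f
    rw [show (fun ω => ∑ x ∈ s, f x ω) = ∑ x ∈ s, f x from by funext ω; simp, map_sum]
  have hUnonempty : ∀ u ∈ U, u.Nonempty := fun u hu =>
    Finset.nonempty_iff_ne_empty.mpr (Finset.mem_erase.mp hu).1
  -- covariance of X i and X i'
  have EXX : ∀ i i', E (fun ω => X i ω * X i' ω)
      = μ ^ 2 + ∑ u ∈ U, σ2 u * (if ∀ j ∈ u, i j = i' j then (1:ℝ) else 0) := by
    intro i i'
    have hfun : (fun ω => X i ω * X i' ω)
        = fun ω => (μ * μ + ((∑ u ∈ U, μ * ε i' u ω) + ((∑ u ∈ U, ε i u ω * μ)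
            + ∑ u ∈ U, ∑ v ∈ U, ε i u ω * ε i' v ω))) := by
      funext ω
      rw [hX i ω, hX i' ω, ← Finset.sum_mul_sum, ← Finset.mul_sum, ← Finset.sum_mul]
      ring
    rw [hfun, Eadd, Eadd, Eadd, Econst, Esum, Esum, Esum]
    have h1 : ∑ u ∈ U, E (fun ω => μ * ε i' u ω) = 0 := by
      apply Finset.sum_eq_zero
      intro u hu
      rw [Esmul, hmean i' u (hUnonempty u hu), mul_zero]
    have h2 : ∑ u ∈ U, E (fun ω => ε i u ω * μ) = 0 := by
      apply Finset.sum_eq_zero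
      intro u hu
      rw [Emulr, hmean i u (hUnonempty u hu), zero_mul]
    have h3 : ∑ u ∈ U, E (fun ω => ∑ v ∈ U, ε i u ω * ε i' v ω)
        = ∑ u ∈ U, σ2 u * (if ∀ j ∈ u, i j = i' j then (1:ℝ) else 0) := by
      apply Finset.sum_congr rfl
      intro u hu
      rw [Esum, Finset.sum_congr rfl
        (fun v hv => hcov i i' u v (hUnonempty u hu) (hUnonempty v hv))]
      by_cases hP : ∀ j ∈ u, i j = i' j
      · rw [if_pos hP]
        have : ∀ v ∈ U, σ2 u * (if u = v ∧ ∀ j ∈ u, i j = i' j then (1:ℝ) else 0)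
            = if u = v then σ2 u else 0 := by
          intro v _
          rw [if_congr (and_iff_left hP) rfl rfl]
          by_cases h : u = v <;> simp [h]
        rw [Finset.sum_congr rfl this, Finset.sum_ite_eq, if_pos hu, mul_one]
      · rw [if_neg hP, mul_zero]
        apply Finset.sum_eq_zero
        intro v _
        simp [hP]
    rw [h1, h2, h3]
    ring
  -- E (X i ^ 2)
  have EX2 : ∀ i, E (fun ω => X i ω ^ 2) = μ ^ 2 + ∑ u ∈ U, σ2 u := by
    intro i
    rw [show (fun ω => X i ω ^ 2) = fun ω => X i ω * X i ω from by funext ω; ring,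
      EXX i i]
    simp
  have hXbarS : ∀ ω, Xbar ω = (1 / N) * ∑ i ∈ S, Z i * X i ω := fun ω => by
    rw [hXbar ω, finZ]
  -- N * ν u as a double sum
  have hνS : ∀ u, N * ν u
      = ∑ i ∈ S, ∑ i' ∈ S, (Z i * Z i') * (if ∀ j ∈ u, i j = i' j then (1:ℝ) else 0) := by
    intro u
    rw [hν u, finZ (fun i => Nmatch i u), ← mul_assoc, mul_one_div_cancel hNne, one_mul]
    apply Finset.sum_congr rfl
    intro i _
    rw [hNmatch i u, finZ (fun i' => if ∀ j ∈ u, i j = i' j then (1:ℝ) else 0),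
      Finset.mul_sum]
    exact Finset.sum_congr rfl fun i' _ => by ring
  -- E (Xbar ^ 2)
  have hB : E (fun ω => Xbar ω ^ 2) = μ ^ 2 + (1 / N) * ∑ u ∈ U, σ2 u * ν u := by
    have hfun : (fun ω => Xbar ω ^ 2)
        = fun ω => (1 / N ^ 2) *
            ∑ i ∈ S, ∑ i' ∈ S, (Z i * Z i') * (X i ω * X i' ω) := by
      funext ω
      rw [hXbarS ω, mul_pow, sq (∑ i ∈ S, Z i * X i ω), Finset.sum_mul_sum]
      rw [div_pow, one_pow]
      congr 1
      apply Finset.sum_congr rfl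
      intro i _
      apply Finset.sum_congr rfl
      intro i' _
      ring
    rw [hfun, Esmul, Esum]
    have hin : ∀ i ∈ S, E (fun ω => ∑ i' ∈ S, (Z i * Z i') * (X i ω * X i' ω))
        = ∑ i' ∈ S, (Z i * Z i') * (μ ^ 2 + ∑ u ∈ U, σ2 u *
            (if ∀ j ∈ u, i j = i' j then (1:ℝ) else 0)) := by
      intro i _
      rw [Esum]
      apply Finset.sum_congr rfl
      intro i' _
      rw [Esmul, EXX i i']
    rw [Finset.sum_congr rfl hin]
    have expand : ∑ i ∈ S, ∑ i' ∈ S, (Z i * Z i') * (μ ^ 2 + ∑ u ∈ U, σ2 u *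
          (if ∀ j ∈ u, i j = i' j then (1:ℝ) else 0))
        = N ^ 2 * μ ^ 2 + ∑ u ∈ U, σ2 u * (N * ν u) := by
      have step : ∀ i ∈ S, ∀ i' ∈ S, (Z i * Z i') * (μ ^ 2 + ∑ u ∈ U, σ2 u *
            (if ∀ j ∈ u, i j = i' j then (1:ℝ) else 0))
          = (Z i * Z i') * μ ^ 2 + ∑ u ∈ U, σ2 u *
              ((Z i * Z i') * (if ∀ j ∈ u, i j = i' j then (1:ℝ) else 0)) := by
        intro i _ i' _
        rw [mul_add, Finset.mul_sum]
        congr 1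
        exact Finset.sum_congr rfl fun u _ => by ring
      calc ∑ i ∈ S, ∑ i' ∈ S, (Z i * Z i') * (μ ^ 2 + ∑ u ∈ U, σ2 u *
            (if ∀ j ∈ u, i j = i' j then (1:ℝ) else 0))
          = ∑ i ∈ S, ∑ i' ∈ S, ((Z i * Z i') * μ ^ 2 + ∑ u ∈ U, σ2 u *
              ((Z i * Z i') * (if ∀ j ∈ u, i j = i' j then (1:ℝ) else 0))) := by
            exact Finset.sum_congr rfl fun i hi =>
              Finset.sum_congr rfl fun i' hi' => step i hi i' hi'
        _ = (∑ i ∈ S, ∑ i' ∈ S, (Z i * Z i') * μ ^ 2)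
            + ∑ i ∈ S, ∑ i' ∈ S, ∑ u ∈ U, σ2 u *
                ((Z i * Z i') * (if ∀ j ∈ u, i j = i' j then (1:ℝ) else 0)) := by
            rw [← Finset.sum_add_distrib]
            exact Finset.sum_congr rfl fun i _ => by rw [← Finset.sum_add_distrib]
        _ = N ^ 2 * μ ^ 2 + ∑ u ∈ U, σ2 u * (N * ν u) := by
            congr 1
            · have e1 : ∑ i ∈ S, ∑ i' ∈ S, (Z i * Z i') * μ ^ 2
                  = (∑ i ∈ S, ∑ i' ∈ S, Z i * Z i') * μ ^ 2 := by
                rw [Finset.sum_mul]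
                exact Finset.sum_congr rfl fun i _ => by rw [Finset.sum_mul]
              rw [e1, ← Finset.sum_mul_sum, hNS]; ring
            · calc ∑ i ∈ S, ∑ i' ∈ S, ∑ u ∈ U, σ2 u *
                    ((Z i * Z i') * (if ∀ j ∈ u, i j = i' j then (1:ℝ) else 0))
                  = ∑ i ∈ S, ∑ u ∈ U, ∑ i' ∈ S, σ2 u *
                      ((Z i * Z i') * (if ∀ j ∈ u, i j = i' j then (1:ℝ) else 0)) :=
                    Finset.sum_congr rfl fun i _ => Finset.sum_comm
                _ = ∑ u ∈ U, ∑ i ∈ S, ∑ i' ∈ S, σ2 u *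
                      ((Z i * Z i') * (if ∀ j ∈ u, i j = i' j then (1:ℝ) else 0)) :=
                    Finset.sum_comm
                _ = ∑ u ∈ U, σ2 u * (N * ν u) := by
                    apply Finset.sum_congr rfl
                    intro u _
                    rw [hνS u, Finset.mul_sum]
                    apply Finset.sum_congr rfl
                    intro i _
                    rw [Finset.mul_sum]
    rw [expand]
    have e2 : ∑ u ∈ U, σ2 u * (N * ν u) = N * ∑ u ∈ U, σ2 u * ν u := by
      rw [Finset.mul_sum]
      exact Finset.sum_congr rfl fun u _ => by ring
    rw [e2]
    field_simp
  -- E of the sum of Z i * X i ^2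
  have hA : E (fun ω => ∑ i ∈ S, Z i * X i ω ^ 2)
      = N * (μ ^ 2 + ∑ u ∈ U, σ2 u) := by
    rw [Esum]
    have : ∀ i ∈ S, E (fun ω => Z i * X i ω ^ 2) = Z i * (μ ^ 2 + ∑ u ∈ U, σ2 u) := by
      intro i _
      rw [Esmul, EX2 i]
    rw [Finset.sum_congr rfl this, ← Finset.sum_mul, hNS]
  -- rewrite the integrand
  have key : (fun ω => (1 / N ^ 2) * ∑ᶠ i, Z i * (X i ω - Xbar ω) ^ 2)
      = fun ω => (1 / N ^ 2) * ((∑ i ∈ S, Z i * X i ω ^ 2) - N * Xbar ω ^ 2) := by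
    funext ω
    rw [finZ (fun i => (X i ω - Xbar ω) ^ 2)]
    congr 1
    have h1 : ∑ i ∈ S, Z i * X i ω = N * Xbar ω := by
      rw [hXbarS ω, ← mul_assoc, mul_one_div_cancel hNne, one_mul]
    have expand : ∑ i ∈ S, Z i * (X i ω - Xbar ω) ^ 2
        = (∑ i ∈ S, Z i * X i ω ^ 2) - 2 * Xbar ω * (∑ i ∈ S, Z i * X i ω)
          + Xbar ω ^ 2 * (∑ i ∈ S, Z i) := by
      rw [Finset.mul_sum, Finset.mul_sum, ← Finset.sum_sub_distrib,
        ← Finset.sum_add_distrib]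
      exact Finset.sum_congr rfl fun i _ => by ring
    rw [expand, h1, hNS]
    ring
  rw [key, Esmul, Esub, Esmul, hA, hB]
  have hrhs : ∑ u ∈ U, σ2 u * (1 - ν u / N)
      = (∑ u ∈ U, σ2 u) - (1 / N) * ∑ u ∈ U, σ2 u * ν u := by
    rw [Finset.mul_sum, ← Finset.sum_sub_distrib]
    apply Finset.sum_congr rfl
    intro u _
    field_simp
  rw [hrhs]
  field_simp
  ring
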